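/- arXiv:math-ph/0512068 — 2 statements merged into one kernel-verified Lean document; each statement's English description precedes it below -/
import Mathlib

section
/- Every restricted Lorentz transformation T admits a unique polar decomposition T = ρβ where β = (T*T)^{1/2} is a boost and ρ = Tβ^{-1} is a rotation, with adjoints and square roots taken with respect to the Euclidean inner product ⟨x,y⟩_{e₀} = -g(x,y) + 2g(x,e₀)g(y,e₀) determined by a fixed future-directed timelike unit vector e₀; moreover ρ and β again lie in the restricted Lorentz group. -/
noncomputable section

/-- Minkowski spacetime ℝ^{1+3}. -/
abbrev V4 : Type := Fin 4 → ℝ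

/-- The Minkowski metric of signature (+,-,-,-). -/
def mg (x y : V4) : ℝ := x 0 * y 0 - x 1 * y 1 - x 2 * y 2 - x 3 * y 3

/-- The distinguished future-directed timelike unit vector. -/
def e0 : V4 := fun i => if i = 0 then 1 else 0

/-- A restricted Lorentz transformation: preserves the metric, has determinant 1,
and preserves the time orientation. -/
def IsRestrictedLorentz (T : V4 →ₗ[ℝ] V4) : Prop :=
  (∀ x y, mg (T x) (T y) = mg x y) ∧ LinearMap.det T = 1 ∧ 0 < (T e0) 0

/-- The Euclidean inner product `⟨x,y⟩_e = -g(x,y) + 2 g(x,e) g(y,e)`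
determined by a timelike unit vector `e`. -/
def inn (e x y : V4) : ℝ := -mg x y + 2 * mg x e * mg y e

/-- A rotation with respect to `e`: a restricted Lorentz transformation fixing `e`. -/
def IsRotationAt (e : V4) (T : V4 →ₗ[ℝ] V4) : Prop :=
  IsRestrictedLorentz T ∧ T e = e

/-- A boost with respect to `e`: a restricted Lorentz transformation that is
self-adjoint and positive with respect to `⟨·,·⟩_e`. -/
def IsBoostAt (e : V4) (T : V4 →ₗ[ℝ] V4) : Prop :=
  IsRestrictedLorentz T ∧ (∀ x y, inn e (T x) y = inn e x (T y)) ∧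
    (∀ x, x ≠ 0 → 0 < inn e (T x) x)

open Matrix
def eta : Matrix (Fin 4) (Fin 4) ℝ := Matrix.diagonal (fun i => if i = 0 then 1 else -1)

lemma inn_dot (x y : V4) : inn e0 x y = x ⬝ᵥ y := by
  simp [inn, mg, e0, dotProduct, Fin.sum_univ_four]; ring

lemma eta_mul_eta : eta * eta = 1 := by
  rw [eta, Matrix.diagonal_mul_diagonal]
  have : (fun i : Fin 4 => (if i = 0 then (1:ℝ) else -1) * (if i = 0 then 1 else -1)) = fun _ => (1:ℝ) := by
    funext i; by_cases h : i = 0 <;> simp [h]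
  rw [this, Matrix.diagonal_one]

lemma eta_transpose : etaᵀ = eta := Matrix.diagonal_transpose _

lemma e0_single : e0 = Pi.single 0 1 := by
  funext i; simp [e0, Pi.single_apply]

lemma mg_dot (x y : V4) : mg x y = x ⬝ᵥ (eta *ᵥ y) := by
  simp [mg, eta, dotProduct, Matrix.mulVec_diagonal, Fin.sum_univ_four]
  ring

lemma dot_mulVec_left (M : Matrix (Fin 4) (Fin 4) ℝ) (x y : V4) :
    (M *ᵥ x) ⬝ᵥ y = x ⬝ᵥ (Mᵀ *ᵥ y) := by
  rw [dotProduct_comm, Matrix.dotProduct_mulVec, dotProduct_comm,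
    Matrix.mulVec_transpose]

lemma matrix_ext_of_dot {A B : Matrix (Fin 4) (Fin 4) ℝ}
    (h : ∀ x y : V4, x ⬝ᵥ (A *ᵥ y) = x ⬝ᵥ (B *ᵥ y)) : A = B := by
  ext i j
  have := h (Pi.single i 1) (Pi.single j 1)
  simpa [Matrix.mulVec_single, single_dotProduct] using this

lemma mg_mulVec (M : Matrix (Fin 4) (Fin 4) ℝ) (x y : V4) :
    mg (M *ᵥ x) (M *ᵥ y) = x ⬝ᵥ ((Mᵀ * eta * M) *ᵥ y) := by
  rw [mg_dot, Matrix.mulVec_mulVec, dot_mulVec_left, Matrix.mulVec_mulVec,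
    Matrix.mul_assoc]

lemma lorentz_matrix_iff (M : Matrix (Fin 4) (Fin 4) ℝ) :
    (∀ x y : V4, mg (M *ᵥ x) (M *ᵥ y) = mg x y) ↔ Mᵀ * eta * M = eta := by
  constructor
  · intro h
    apply matrix_ext_of_dot
    intro x y
    rw [← mg_mulVec, h, mg_dot]
  · intro h x y
    rw [mg_mulVec, h, mg_dot]

lemma mulVec_e0_zero (P : Matrix (Fin 4) (Fin 4) ℝ) : (P *ᵥ e0) 0 = P 0 0 := by
  rw [e0_single]
  simp [Matrix.mulVec_single]

lemma isRL_of_matrix (P : Matrix (Fin 4) (Fin 4) ℝ) (h1 : Pᵀ * eta * P = eta)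
    (h2 : P.det = 1) (h3 : 0 < P 0 0) : IsRestrictedLorentz (Matrix.toLin' P) := by
  refine ⟨?_, ?_, ?_⟩
  · intro x y
    simp only [Matrix.toLin'_apply]
    exact (lorentz_matrix_iff P).mpr h1 x y
  · rw [LinearMap.det_toLin', h2]
  · rw [Matrix.toLin'_apply, mulVec_e0_zero]; exact h3

lemma he0dot (v : V4) : e0 ⬝ᵥ v = v 0 := by
  rw [e0_single, single_dotProduct, one_mul]

lemma he0ne : (e0 : V4) ≠ 0 := by
  intro h
  have := congrFun h 0
  simp [e0] at this

open scoped MatrixOrder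

/-- Every restricted Lorentz transformation `T` admits a unique polar decomposition
`T = ρ ∘ β` into a rotation `ρ` and a boost `β` with respect to `e₀`, where
`β = (T*T)^{1/2}`, i.e. `β² = T*T` (expressed via the inner product `⟨·,·⟩_{e₀}`:
`⟨Tx, Ty⟩ = ⟨x, β(β y)⟩` for all `x, y`); both factors lie again in the
restricted Lorentz group. -/
theorem polar_decomposition (T : V4 →ₗ[ℝ] V4) (hT : IsRestrictedLorentz T) :
    ∃! p : (V4 →ₗ[ℝ] V4) × (V4 →ₗ[ℝ] V4),
      IsRotationAt e0 p.1 ∧ IsBoostAt e0 p.2 ∧ T = p.1 ∘ₗ p.2 ∧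
        ∀ x y, inn e0 (T x) (T y) = inn e0 x (p.2 (p.2 y)) := by
  classical
  obtain ⟨hTg, hTdet, hTe⟩ := hT
  set M : Matrix (Fin 4) (Fin 4) ℝ := LinearMap.toMatrix' T with hMdef
  have hTlin : Matrix.toLin' M = T := by rw [hMdef, Matrix.toLin'_toMatrix']
  have hTx : ∀ x, T x = M *ᵥ x := by
    intro x; rw [← hTlin, Matrix.toLin'_apply]
  have hMdet : M.det = 1 := by rw [hMdef, LinearMap.det_toMatrix', hTdet]
  have hMg : Mᵀ * eta * M = eta := by
    apply (lorentz_matrix_iff M).mp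
    intro x y; rw [← hTx, ← hTx]; exact hTg x y
  have hM00 : 0 < M 0 0 := by rw [← mulVec_e0_zero M, ← hTx]; exact hTe
  have hMg1 : Mᵀ * (eta * M) = eta := by rw [← Matrix.mul_assoc]; exact hMg
  set N : Matrix (Fin 4) (Fin 4) ℝ := eta * Mᵀ * eta with hNdef
  have hNM : N * M = 1 := by
    calc N * M = eta * (Mᵀ * (eta * M)) := by rw [hNdef]; simp only [Matrix.mul_assoc]
      _ = 1 := by rw [hMg1, eta_mul_eta]
  have hMN : M * N = 1 := mul_eq_one_comm.mp hNM
  have hMetaMt : M * (eta * Mᵀ) = eta := by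
    have h1 : (M * N) * eta = 1 * eta := by rw [hMN]
    calc M * (eta * Mᵀ) = M * (eta * (Mᵀ * (eta * eta))) := by
          rw [eta_mul_eta, Matrix.mul_one]
      _ = (M * N) * eta := by rw [hNdef]; simp only [Matrix.mul_assoc]
      _ = eta := by rw [hMN, Matrix.one_mul]
  have hA : (Mᵀ * M).PosSemidef := by
    have := Matrix.posSemidef_conjTranspose_mul_self M
    rwa [Matrix.conjTranspose_eq_transpose_of_trivial] at this
  set A : Matrix (Fin 4) (Fin 4) ℝ := Mᵀ * M with hAdef
  have hAdet : A.det = 1 := by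
    rw [hAdef, Matrix.det_mul, Matrix.det_transpose, hMdet, one_mul]
  have hAunit : IsUnit A.det := by rw [hAdet]; exact isUnit_one
  have hAetaA : A * (eta * A) = eta := by
    calc A * (eta * A) = Mᵀ * ((M * (eta * Mᵀ)) * M) := by
          rw [hAdef]; simp only [Matrix.mul_assoc]
      _ = Mᵀ * (eta * M) := by rw [hMetaMt]
      _ = eta := hMg1
  set B : Matrix (Fin 4) (Fin 4) ℝ := CFC.sqrt A with hBdef
  have hB : B.PosSemidef := (CFC.sqrt_nonneg A).posSemidef
  have hBB : B * B = A := CFC.sqrt_mul_sqrt_self A hA.nonneg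
  have hBt : Bᵀ = B := by
    rw [← Matrix.conjTranspose_eq_transpose_of_trivial]
    exact hB.1
  have hBmv0 : ∀ x : V4, B *ᵥ x = 0 → x = 0 := by
    intro x hx
    have hAx : A *ᵥ x = 0 := by
      rw [← hBB, ← Matrix.mulVec_mulVec, hx, Matrix.mulVec_zero]
    calc x = (A⁻¹ * A) *ᵥ x := by rw [Matrix.nonsing_inv_mul _ hAunit, Matrix.one_mulVec]
      _ = A⁻¹ *ᵥ (A *ᵥ x) := by rw [Matrix.mulVec_mulVec]
      _ = 0 := by rw [hAx, Matrix.mulVec_zero]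
  have hBpd : B.PosDef := by
    refine Matrix.posDef_iff_dotProduct_mulVec.mpr ⟨hB.1, fun x hx => lt_of_le_of_ne (hB.dotProduct_mulVec_nonneg x) fun h => ?_⟩
    exact hx (hBmv0 x ((hB.dotProduct_mulVec_zero_iff x).mp h.symm))
  have hBdet : B.det = 1 := by
    have h2 : B.det * B.det = 1 := by rw [← Matrix.det_mul, hBB, hAdet]
    have hpos := hBpd.det_pos
    nlinarith
  have hBunit : IsUnit B.det := by rw [hBdet]; exact isUnit_one
  have hBinvB : B⁻¹ * B = 1 := Matrix.nonsing_inv_mul _ hBunit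
  have hBBinv : B * B⁻¹ = 1 := Matrix.mul_nonsing_inv _ hBunit
  have hAinv : A⁻¹ = eta * A * eta := by
    apply Matrix.inv_eq_left_inv
    calc (eta * A * eta) * A = eta * (A * (eta * A)) := by simp only [Matrix.mul_assoc]
      _ = 1 := by rw [hAetaA, eta_mul_eta]
  have hC : (eta * B * eta).PosSemidef := by
    have := hB.mul_mul_conjTranspose_same eta
    rwa [Matrix.conjTranspose_eq_transpose_of_trivial, eta_transpose] at this
  have hCsq : (eta * B * eta) * (eta * B * eta) = A⁻¹ := by
    calc (eta * B * eta) * (eta * B * eta)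
        = eta * (B * ((eta * eta) * (B * eta))) := by simp only [Matrix.mul_assoc]
      _ = eta * A * eta := by rw [eta_mul_eta, Matrix.one_mul, ← hBB]; simp only [Matrix.mul_assoc]
      _ = A⁻¹ := hAinv.symm
  have hBinvsq : B⁻¹ * B⁻¹ = A⁻¹ := by rw [← Matrix.mul_inv_rev, hBB]
  have hCB : eta * B * eta = B⁻¹ := by
    rw [← CFC.sqrt_mul_self (eta * B * eta) hC.nonneg, hCsq, ← hBinvsq,
      CFC.sqrt_mul_self _ hB.inv.nonneg]
  have hBetaB : B * (eta * B) = eta := by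
    have h1 : B * (eta * B * eta) = 1 := by rw [hCB]; exact hBBinv
    have h2 : B * (eta * B * eta) * eta = 1 * eta := by rw [h1]
    calc B * (eta * B) = B * (eta * (B * (eta * eta))) := by rw [eta_mul_eta, Matrix.mul_one]
      _ = B * (eta * B * eta) * eta := by simp only [Matrix.mul_assoc]
      _ = eta := by rw [h2, Matrix.one_mul]
  have hBlor : Bᵀ * eta * B = eta := by
    rw [hBt, Matrix.mul_assoc]; exact hBetaB
  have hB00 : 0 < B 0 0 := by
    have := hBpd.dotProduct_mulVec_pos he0ne
    rw [star_trivial, he0dot, mulVec_e0_zero] at this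
    exact this
  -- the rotation matrix
  set Rm : Matrix (Fin 4) (Fin 4) ℝ := M * B⁻¹ with hRdef
  have hRmB : Rm * B = M := by rw [hRdef, Matrix.mul_assoc, hBinvB, Matrix.mul_one]
  have hBinvT : (B⁻¹)ᵀ = B⁻¹ := by rw [Matrix.transpose_nonsing_inv, hBt]
  have hRorth : Rmᵀ * Rm = 1 := by
    rw [hRdef, Matrix.transpose_mul, hBinvT]
    calc B⁻¹ * Mᵀ * (M * B⁻¹) = B⁻¹ * ((Mᵀ * M) * B⁻¹) := by simp only [Matrix.mul_assoc]
      _ = B⁻¹ * (B * (B * B⁻¹)) := by rw [← hAdef, ← hBB]; simp only [Matrix.mul_assoc]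
      _ = B⁻¹ * B := by rw [hBBinv, Matrix.mul_one]
      _ = 1 := hBinvB
  have hBinvEtaBinv : B⁻¹ * (eta * B⁻¹) = eta := by
    rw [← hCB]
    calc (eta * B * eta) * (eta * (eta * B * eta))
        = eta * (B * ((eta * (eta * eta)) * (B * eta))) := by simp only [Matrix.mul_assoc]
      _ = eta * ((B * (eta * B)) * eta) := by
          rw [eta_mul_eta, Matrix.mul_one]; simp only [Matrix.mul_assoc]
      _ = eta * (eta * eta) := by rw [hBetaB]
      _ = eta := by rw [eta_mul_eta, Matrix.mul_one]
  have hRlor : Rmᵀ * eta * Rm = eta := by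
    rw [hRdef, Matrix.transpose_mul, hBinvT]
    calc B⁻¹ * Mᵀ * eta * (M * B⁻¹) = B⁻¹ * ((Mᵀ * (eta * M)) * B⁻¹) := by
          simp only [Matrix.mul_assoc]
      _ = B⁻¹ * (eta * B⁻¹) := by rw [hMg1]
      _ = eta := hBinvEtaBinv
  have hRRt : Rm * Rmᵀ = 1 := mul_eq_one_comm.mp hRorth
  have hcomm : eta * Rm = Rm * eta := by
    have h := congrArg (fun X => Rm * X) hRlor
    calc eta * Rm = Rm * Rmᵀ * (eta * Rm) := by rw [hRRt, Matrix.one_mul]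
      _ = Rm * (Rmᵀ * eta * Rm) := by simp only [Matrix.mul_assoc]
      _ = Rm * eta := h
  have heta_e0 : eta *ᵥ e0 = e0 := by
    funext i
    by_cases h : i = 0 <;> simp [eta, Matrix.mulVec_diagonal, e0, h]
  have hveta : eta *ᵥ (Rm *ᵥ e0) = Rm *ᵥ e0 := by
    rw [Matrix.mulVec_mulVec, hcomm, ← Matrix.mulVec_mulVec, heta_e0]
  have hvi : ∀ i : Fin 4, i ≠ 0 → (Rm *ᵥ e0) i = 0 := by
    intro i hi
    have := congrFun hveta i
    rw [show (eta *ᵥ (Rm *ᵥ e0)) i = -((Rm *ᵥ e0) i) by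
      simp [eta, Matrix.mulVec_diagonal, hi]] at this
    linarith
  have hvv : (Rm *ᵥ e0) ⬝ᵥ (Rm *ᵥ e0) = 1 := by
    rw [dot_mulVec_left, Matrix.mulVec_mulVec, hRorth, Matrix.one_mulVec, he0dot]
    simp [e0]
  have hv0sq : (Rm *ᵥ e0) 0 * (Rm *ᵥ e0) 0 = 1 := by
    have h1 := hvi 1 (by decide)
    have h2 := hvi 2 (by decide)
    have h3 := hvi 3 (by decide)
    rw [dotProduct, Fin.sum_univ_four, h1, h2, h3] at hvv
    linarith [hvv]
  -- sign of v 0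
  have hBinv_e0 : M *ᵥ (B⁻¹ *ᵥ e0) = ((Rm *ᵥ e0) 0) • e0 := by
    have hveq : Rm *ᵥ e0 = ((Rm *ᵥ e0) 0) • e0 := by
      funext i
      by_cases h : i = 0
      · subst h; simp [e0]
      · rw [hvi i h]; simp [e0, h]
    rw [Matrix.mulVec_mulVec, ← hRdef]; exact hveq
  have hN00 : N 0 0 = M 0 0 := by
    rw [hNdef]
    simp [eta, Matrix.mul_diagonal, Matrix.diagonal_mul]
  have hBinve0 : B⁻¹ *ᵥ e0 = ((Rm *ᵥ e0) 0) • (N *ᵥ e0) := by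
    calc B⁻¹ *ᵥ e0 = (N * M) *ᵥ (B⁻¹ *ᵥ e0) := by rw [hNM, Matrix.one_mulVec]
      _ = N *ᵥ (M *ᵥ (B⁻¹ *ᵥ e0)) := by simp only [Matrix.mulVec_mulVec, Matrix.mul_assoc]
      _ = N *ᵥ (((Rm *ᵥ e0) 0) • e0) := by rw [hBinv_e0]
      _ = ((Rm *ᵥ e0) 0) • (N *ᵥ e0) := by rw [Matrix.mulVec_smul]
  have hBinv00 : 0 < (B⁻¹ *ᵥ e0) 0 := by
    have : B⁻¹ *ᵥ e0 = eta *ᵥ (B *ᵥ e0) := by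
      rw [← hCB, ← Matrix.mulVec_mulVec, ← Matrix.mulVec_mulVec, heta_e0]
    rw [this, show (eta *ᵥ (B *ᵥ e0)) 0 = (B *ᵥ e0) 0 by
      simp [eta, Matrix.mulVec_diagonal]]
    rw [mulVec_e0_zero]; exact hB00
  have hv0pos : 0 < (Rm *ᵥ e0) 0 := by
    have h := congrFun hBinve0 0
    rw [Pi.smul_apply, smul_eq_mul, mulVec_e0_zero B⁻¹, mulVec_e0_zero N, hN00] at h
    rw [mulVec_e0_zero B⁻¹] at hBinv00
    rw [h] at hBinv00
    nlinarith
  have hv0 : (Rm *ᵥ e0) 0 = 1 := by nlinarith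
  have hRe0 : Rm *ᵥ e0 = e0 := by
    funext i
    by_cases h : i = 0
    · subst h; rw [hv0]; simp [e0]
    · rw [hvi i h]; simp [e0, h]
  have hRdet : Rm.det = 1 := by
    rw [hRdef, Matrix.det_mul, hMdet, Matrix.det_nonsing_inv, hBdet, Ring.inverse_one, one_mul]
  have hR00 : 0 < Rm 0 0 := by
    rw [← mulVec_e0_zero Rm, hRe0]; simp [e0]
  refine ⟨(Matrix.toLin' Rm, Matrix.toLin' B), ⟨⟨isRL_of_matrix Rm hRlor hRdet hR00, ?_⟩,
    ⟨isRL_of_matrix B hBlor hBdet hB00, ?_, ?_⟩, ?_, ?_⟩, ?_⟩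
  · rw [Matrix.toLin'_apply, hRe0]
  · intro x y
    rw [inn_dot, inn_dot, Matrix.toLin'_apply, Matrix.toLin'_apply, dot_mulVec_left, hBt]
  · intro x hx
    rw [inn_dot, Matrix.toLin'_apply, dotProduct_comm]
    have := hBpd.dotProduct_mulVec_pos hx
    rwa [star_trivial] at this
  · rw [← hTlin, ← hRmB, Matrix.toLin'_mul]
  · intro x y
    simp only [inn_dot, hTx, Matrix.toLin'_apply]
    rw [dot_mulVec_left]
    simp only [Matrix.mulVec_mulVec]
    rw [hBB, hAdef]
  · rintro ⟨ρ, β⟩ ⟨⟨hρRL, hρe⟩, ⟨hβRL, hβsa, hβpos⟩, hcomp, hsq⟩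
    set B' : Matrix (Fin 4) (Fin 4) ℝ := LinearMap.toMatrix' β with hB'def
    have hβx : ∀ x, β x = B' *ᵥ x := by
      intro x; rw [hB'def, ← Matrix.toLin'_apply, Matrix.toLin'_toMatrix']
    have hB't : B'ᵀ = B' := by
      apply matrix_ext_of_dot
      intro x y
      have := hβsa x y
      simp only [inn_dot, hβx] at this
      rw [dot_mulVec_left] at this
      exact this
    have hB'psd : B'.PosSemidef := by
      refine Matrix.posSemidef_iff_dotProduct_mulVec.mpr ⟨?_, ?_⟩
      · rw [Matrix.IsHermitian, Matrix.conjTranspose_eq_transpose_of_trivial]; exact hB't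
      · intro x
        rcases eq_or_ne x 0 with rfl | hx
        · simp
        · have := hβpos x hx
          simp only [inn_dot, hβx] at this
          rw [dotProduct_comm] at this
          rw [star_trivial]
          exact le_of_lt this
    have hAB' : A = B' * B' := by
      apply matrix_ext_of_dot
      intro x y
      have := hsq x y
      simp only [inn_dot, hβx, hTx] at this
      rw [dot_mulVec_left] at this
      simp only [Matrix.mulVec_mulVec] at this
      rw [hAdef]
      exact this
    have hB'B : B' = B := by
      rw [hBdef]
      rw [hAB', CFC.sqrt_mul_self B' hB'psd.nonneg]
    have hβeq : β = Matrix.toLin' B := by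
      rw [← hB'B, hB'def, Matrix.toLin'_toMatrix']
    have hρmat : LinearMap.toMatrix' ρ = Rm := by
      have hcomp' : M = LinearMap.toMatrix' ρ * B' := by
        rw [hMdef, hcomp, LinearMap.toMatrix'_comp, ← hB'def]
      rw [hB'B] at hcomp'
      calc LinearMap.toMatrix' ρ = LinearMap.toMatrix' ρ * (B * B⁻¹) := by
            rw [hBBinv, Matrix.mul_one]
        _ = (LinearMap.toMatrix' ρ * B) * B⁻¹ := by rw [Matrix.mul_assoc]
        _ = M * B⁻¹ := by rw [← hcomp']
        _ = Rm := by rw [hRdef]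
    have hρeq : ρ = Matrix.toLin' Rm := by
      rw [← hρmat, Matrix.toLin'_toMatrix']
    simp only [Prod.mk.injEq]
    exact ⟨hρeq, hβeq⟩
end
end

section
/- If two Rindler wedges W_a and W_b satisfy W_a ∉ {W_b, -W_b}, then the only restricted Lorentz transformation mapping both W_a onto W_a and W_b onto W_b is the identity. -/
noncomputable section

/-- A future-oriented orthonormal zweibein. -/
def IsZweibein (t x : V4) : Prop :=
  mg t t = 1 ∧ mg x x = -1 ∧ mg t x = 0 ∧ 0 < t 0

/-- The Rindler wedge associated with a zweibein `(t,x)`. -/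
def Wedge (t x : V4) : Set V4 := {y : V4 | |mg y t| < mg y x}

lemma mg_comm (x y : V4) : mg x y = mg y x := by unfold mg; ring

lemma mg_add_left (x y z : V4) : mg (x + y) z = mg x z + mg y z := by
  simp [mg]; ring

lemma mg_add_right (x y z : V4) : mg x (y + z) = mg x y + mg x z := by
  simp [mg]; ring

lemma mg_smul_left (a : ℝ) (x z : V4) : mg (a • x) z = a * mg x z := by
  simp [mg]; ring

lemma mg_smul_right (a : ℝ) (x z : V4) : mg x (a • z) = a * mg x z := by
  simp [mg]; ring

lemma mg_neg_left (x z : V4) : mg (-x) z = - mg x z := by simp [mg]; ring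

lemma mg_neg_right (x z : V4) : mg x (-z) = - mg x z := by simp [mg]; ring

lemma mg_sub_left (x y z : V4) : mg (x - y) z = mg x z - mg y z := by
  simp [mg]; ring

lemma mg_sub_right (x y z : V4) : mg x (y - z) = mg x y - mg x z := by
  simp [mg]; ring

lemma mg_zero_left (z : V4) : mg 0 z = 0 := by simp [mg]

lemma mg_zero_right (z : V4) : mg z 0 = 0 := by simp [mg]

/-- `mg` as a linear functional in the first argument. -/
def mgL (w : V4) : V4 →ₗ[ℝ] ℝ where
  toFun y := mg y w
  map_add' x y := mg_add_left x y w
  map_smul' a x := mg_smul_left a x w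

@[simp] lemma mgL_apply (w y : V4) : mgL w y = mg y w := rfl

lemma mg_nondeg {w : V4} (h : ∀ y, mg y w = 0) : w = 0 := by
  have h0 := h ![1,0,0,0]
  have h1 := h ![0,1,0,0]
  have h2 := h ![0,0,1,0]
  have h3 := h ![0,0,0,1]
  simp [mg] at h0 h1 h2 h3
  funext i
  fin_cases i <;> simp [h0, h1, h2, h3]

lemma cs3 (a b : V4) : (a 1*b 1 + a 2*b 2 + a 3*b 3)^2 ≤
    (a 1^2+a 2^2+a 3^2)*(b 1^2+b 2^2+b 3^2) := by
  nlinarith [sq_nonneg (a 1*b 2 - a 2*b 1), sq_nonneg (a 1*b 3 - a 3*b 1),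
    sq_nonneg (a 2*b 3 - a 3*b 2)]

/-- A causal (timelike-or-null) future vector pairs positively with a future timelike vector. -/
lemma pairing_pos {t s : V4} (ht : 0 < mg t t) (ht0 : 0 < t 0)
    (hs : 0 ≤ mg s s) (hs0 : 0 < s 0) : 0 < mg s t := by
  have hcs := cs3 s t
  by_contra hcon
  push_neg at hcon
  unfold mg at *
  set D := s 1 * t 1 + s 2 * t 2 + s 3 * t 3 with hD
  have hDpos : 0 < D := lt_of_lt_of_le (mul_pos hs0 ht0) (by linarith)
  have h1 : s 0 ^ 2 * t 0 ^ 2 ≤ D ^ 2 := by nlinarith [mul_pos hs0 ht0]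
  have h3 : s 1 ^ 2 + s 2 ^ 2 + s 3 ^ 2 ≤ s 0 ^ 2 := by nlinarith
  have h4 : t 1 ^ 2 + t 2 ^ 2 + t 3 ^ 2 < t 0 ^ 2 := by nlinarith
  have h5 : (s 1 ^ 2 + s 2 ^ 2 + s 3 ^ 2) * (t 1 ^ 2 + t 2 ^ 2 + t 3 ^ 2)
      ≤ s 0 ^ 2 * (t 1 ^ 2 + t 2 ^ 2 + t 3 ^ 2) := by
    apply mul_le_mul_of_nonneg_right h3; positivity
  have h6 : s 0 ^ 2 * (t 1 ^ 2 + t 2 ^ 2 + t 3 ^ 2) < s 0 ^ 2 * t 0 ^ 2 := by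
    apply mul_lt_mul_of_pos_left h4
    positivity
  linarith

lemma zero_of_null_time {s : V4} (hs : mg s s = 0) (h0 : s 0 = 0) : s = 0 := by
  unfold mg at hs
  rw [h0] at hs
  have h1 : s 1 = 0 := by nlinarith [sq_nonneg (s 1), sq_nonneg (s 2), sq_nonneg (s 3)]
  have h2 : s 2 = 0 := by nlinarith [sq_nonneg (s 1), sq_nonneg (s 2), sq_nonneg (s 3)]
  have h3 : s 3 = 0 := by nlinarith [sq_nonneg (s 1), sq_nonneg (s 2), sq_nonneg (s 3)]
  funext i; fin_cases i <;> simp [h0, h1, h2, h3]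

lemma pos_time {t s : V4} (ht : 0 < mg t t) (ht0 : 0 < t 0)
    (hs : 0 ≤ mg s s) (hst : 0 < mg s t) (hsne : s ≠ 0) : 0 < s 0 := by
  rcases lt_trichotomy (s 0) 0 with h | h | h
  · have hneg : 0 < mg (-s) t := by
      apply pairing_pos ht ht0
      · rw [mg_neg_left, mg_neg_right]; simpa using hs
      · simp; linarith
    rw [mg_neg_left] at hneg; linarith
  · exfalso
    have hle : mg s s ≤ 0 := by
      unfold mg; rw [h]; nlinarith [sq_nonneg (s 1), sq_nonneg (s 2), sq_nonneg (s 3)]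
    have : mg s s = 0 := le_antisymm hle hs
    exact hsne (zero_of_null_time this h)
  · exact h

/-- A nonzero vector orthogonal to a timelike vector is spacelike. -/
lemma orth_timelike_neg {t y : V4} (ht : 0 < mg t t) (ho : mg y t = 0)
    (hy : y ≠ 0) : mg y y < 0 := by
  by_cases hsp : y 1 = 0 ∧ y 2 = 0 ∧ y 3 = 0
  · exfalso
    have ht0 : t 0 ≠ 0 := by
      intro h0
      unfold mg at ht; rw [h0] at ht
      nlinarith [sq_nonneg (t 1), sq_nonneg (t 2), sq_nonneg (t 3)]
    have hy0 : y 0 = 0 := by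
      unfold mg at ho
      rw [hsp.1, hsp.2.1, hsp.2.2] at ho
      simp at ho
      rcases ho with h | h
      · exact h
      · exact absurd h ht0
    exact hy (by funext i; fin_cases i <;> simp [hy0, hsp.1, hsp.2.1, hsp.2.2])
  · have hpos : 0 < y 1^2 + y 2^2 + y 3^2 := by
      rcases not_and_or.mp hsp with h | h
      · have : 0 < y 1 ^ 2 := by positivity
        nlinarith [sq_nonneg (y 2), sq_nonneg (y 3)]
      rcases not_and_or.mp h with h | h
      · have : 0 < y 2 ^ 2 := by positivity
        nlinarith [sq_nonneg (y 1), sq_nonneg (y 3)]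
      · have : 0 < y 3 ^ 2 := by positivity
        nlinarith [sq_nonneg (y 1), sq_nonneg (y 2)]
    by_contra hcon
    push_neg at hcon
    have hcs := cs3 y t
    unfold mg at *
    have hd : y 0 * t 0 = y 1 * t 1 + y 2 * t 2 + y 3 * t 3 := by linarith
    have h1 : y 0 ^ 2 * t 0 ^ 2 = (y 1 * t 1 + y 2 * t 2 + y 3 * t 3) ^ 2 := by
      linear_combination (y 0 * t 0 + (y 1 * t 1 + y 2 * t 2 + y 3 * t 3)) * hd
    have h4 : t 1 ^ 2 + t 2 ^ 2 + t 3 ^ 2 < t 0 ^ 2 := by nlinarith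
    have h3 : y 1 ^ 2 + y 2 ^ 2 + y 3 ^ 2 ≤ y 0 ^ 2 := by nlinarith
    have h5 := mul_lt_mul_of_pos_left h4 hpos
    have h6 := mul_le_mul_of_nonneg_right h3 (sq_nonneg (t 0))
    nlinarith

section part2

variable {t x t' x' : V4}

lemma mem_wedge {y : V4} : y ∈ Wedge t x ↔ 0 < mg y (x + t) ∧ 0 < mg y (x - t) := by
  unfold Wedge
  rw [Set.mem_setOf_eq, abs_lt, mg_add_right, mg_sub_right]
  constructor
  · rintro ⟨h1, h2⟩; constructor <;> linarith
  · rintro ⟨h1, h2⟩; constructor <;> linarith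

lemma zw_null (h : IsZweibein t x) :
    mg (x+t) (x+t) = 0 ∧ mg (x-t) (x-t) = 0 ∧ mg (x+t) (x-t) = -2 := by
  obtain ⟨htt, hxx, htx, ht0⟩ := h
  have hxt : mg x t = 0 := by rw [mg_comm]; exact htx
  refine ⟨?_, ?_, ?_⟩ <;>
    simp only [mg_add_left, mg_add_right, mg_sub_left, mg_sub_right, htt, hxx, htx, hxt] <;> ring

lemma zw_sign (h : IsZweibein t x) : 0 < (x+t) 0 ∧ (x-t) 0 < 0 := by
  obtain ⟨hn1, hn2, hn3⟩ := zw_null h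
  obtain ⟨htt, hxx, htx, ht0⟩ := h
  have hxt : mg x t = 0 := by rw [mg_comm]; exact htx
  have hut : mg (x+t) t = 1 := by rw [mg_add_left, hxt, htt]; ring
  have hu0 : 0 < (x+t) 0 := by
    apply pos_time (t := t) (by rw [htt]; norm_num) ht0 (le_of_eq hn1.symm) (by rw [hut]; norm_num)
    intro h0
    rw [h0, mg_zero_left] at hut
    norm_num at hut
  refine ⟨hu0, ?_⟩
  have hvv : mg (t-x) (t-x) = 0 := by
    simp only [mg_sub_left, mg_sub_right, htt, hxx, htx, hxt]; ring
  have hvt : mg (t-x) t = 1 := by rw [mg_sub_left, hxt, htt]; ring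
  have : 0 < (t-x) 0 := by
    apply pos_time (t := t) (by rw [htt]; norm_num) ht0 (le_of_eq hvv.symm) (by rw [hvt]; norm_num)
    intro h0
    rw [h0, mg_zero_left] at hvt
    norm_num at hvt
  have hx : (x-t) 0 = -((t-x) 0) := by simp
  rw [hx]; linarith

lemma cone_extract {u v w : V4} (huu : mg u u = 0) (hvv : mg v v = 0)
    (huv : mg u v = -2) (hww : mg w w = 0)
    (hpos : ∀ z, 0 ≤ mg z u → 0 ≤ mg z v → 0 ≤ mg z w)
    (hu0 : 0 < u 0) (hv0 : v 0 < 0) (hw0 : 0 < w 0) :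
    ∃ a : ℝ, 0 < a ∧ w = a • u := by
  have hvu : mg v u = -2 := by rw [mg_comm]; exact huv
  set a := -(mg v w)/2 with hadef
  set b := -(mg u w)/2 with hbdef
  have ha : 0 ≤ a := by
    have h1 : (0:ℝ) ≤ mg ((-(1/2):ℝ) • v) u := by rw [mg_smul_left, hvu]; norm_num
    have h2 : (0:ℝ) ≤ mg ((-(1/2):ℝ) • v) v := by rw [mg_smul_left, hvv]; norm_num
    have := hpos _ h1 h2
    rw [mg_smul_left] at this
    rw [hadef]; linarith
  have hb : 0 ≤ b := by
    have h1 : (0:ℝ) ≤ mg ((-(1/2):ℝ) • u) u := by rw [mg_smul_left, huu]; norm_num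
    have h2 : (0:ℝ) ≤ mg ((-(1/2):ℝ) • u) v := by rw [mg_smul_left, huv]; norm_num
    have := hpos _ h1 h2
    rw [mg_smul_left] at this
    rw [hbdef]; linarith
  have key : ∀ z, mg z w = a * mg z u + b * mg z v := by
    intro z
    set z₀ := z + ((mg z u)/2) • v + ((mg z v)/2) • u with hz₀
    have e1 : mg z₀ u = 0 := by
      rw [hz₀, mg_add_left, mg_add_left, mg_smul_left, mg_smul_left, hvu, huu]; ring
    have e2 : mg z₀ v = 0 := by
      rw [hz₀, mg_add_left, mg_add_left, mg_smul_left, mg_smul_left, hvv, huv]; ring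
    have p1 := hpos z₀ (le_of_eq e1.symm) (le_of_eq e2.symm)
    have p2 := hpos (-z₀) (by rw [mg_neg_left, e1]; norm_num) (by rw [mg_neg_left, e2]; norm_num)
    rw [mg_neg_left] at p2
    have hz0 : mg z₀ w = 0 := le_antisymm (by linarith) p1
    rw [hz₀, mg_add_left, mg_add_left, mg_smul_left, mg_smul_left] at hz0
    rw [hadef, hbdef]
    have hvwc : mg v w = mg v w := rfl
    linarith [hz0]
  have hrep : w = a • u + b • v := by
    have hz : w - (a • u + b • v) = 0 := by
      apply mg_nondeg
      intro y
      rw [mg_comm, mg_sub_left, mg_add_left, mg_smul_left, mg_smul_left,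
        mg_comm u y, mg_comm v y, mg_comm w y, key y]
      ring
    exact sub_eq_zero.mp hz
  have hab : a * b = 0 := by
    have : mg (a • u + b • v) (a • u + b • v) = 0 := by rw [← hrep]; exact hww
    simp only [mg_add_left, mg_add_right, mg_smul_left, mg_smul_right,
      huu, hvv, huv, hvu] at this
    nlinarith
  have hw0' : w 0 = a * u 0 + b * v 0 := by
    rw [hrep]; simp
  rcases mul_eq_zero.mp hab with h0 | h0
  · exfalso
    rw [h0] at hw0'
    nlinarith
  · refine ⟨a, ?_, ?_⟩
    · rcases lt_or_eq_of_le ha with h | h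
      · exact h
      · exfalso; rw [← h, h0] at hw0'; simp at hw0'; linarith
    · rw [hrep, h0]; simp

end part2

section part3

variable {t x t' x' : V4}

lemma neg_x_mem_wedge (h : IsZweibein t x) : -x ∈ Wedge t x := by
  obtain ⟨htt, hxx, htx, ht0⟩ := h
  have hxt : mg x t = 0 := by rw [mg_comm]; exact htx
  rw [mem_wedge]
  constructor <;>
  · rw [mg_neg_left] <;> simp only [mg_add_right, mg_sub_right, hxx, hxt] <;> norm_num

/-- Key analytic lemma: equality of wedges transfers nonnegativity conditions. -/
lemma wedge_eq_imp (h : IsZweibein t x) (h' : IsZweibein t' x')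
    (heq : Wedge t x = Wedge t' x') :
    ∀ z, 0 ≤ mg z (x + t) → 0 ≤ mg z (x - t) →
      0 ≤ mg z (x' + t') ∧ 0 ≤ mg z (x' - t') := by
  have hmem : -x ∈ Wedge t' x' := heq ▸ neg_x_mem_wedge h
  rw [mem_wedge] at hmem
  obtain ⟨hB1, hB2⟩ := hmem
  have hx1 : mg (-x) (x + t) = 1 := by
    obtain ⟨htt, hxx, htx, ht0⟩ := h
    rw [mg_neg_left, mg_add_right, hxx, mg_comm x t, htx]; norm_num
  have hx2 : mg (-x) (x - t) = 1 := by
    obtain ⟨htt, hxx, htx, ht0⟩ := h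
    rw [mg_neg_left, mg_sub_right, hxx, mg_comm x t, htx]; norm_num
  intro z h1 h2
  have step : ∀ ε : ℝ, 0 < ε → (z + ε • (-x)) ∈ Wedge t' x' := by
    intro ε hε
    rw [← heq, mem_wedge]
    constructor
    · rw [mg_add_left, mg_smul_left, hx1]; nlinarith
    · rw [mg_add_left, mg_smul_left, hx2]; nlinarith
  constructor
  · by_contra hcon
    push_neg at hcon
    have hε : 0 < -(mg z (x' + t')) / mg (-x) (x' + t') := div_pos (by linarith) hB1
    have := ((mem_wedge).mp (step _ hε)).1
    rw [mg_add_left, mg_smul_left] at this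
    rw [div_mul_cancel₀] at this
    · linarith
    · linarith
  · by_contra hcon
    push_neg at hcon
    have hε : 0 < -(mg z (x' - t')) / mg (-x) (x' - t') := div_pos (by linarith) hB2
    have := ((mem_wedge).mp (step _ hε)).2
    rw [mg_add_left, mg_smul_left] at this
    rw [div_mul_cancel₀] at this
    · linarith
    · linarith

/-- Equal wedges have identical characteristic null rays. -/
lemma rays_of_wedge_eq (h : IsZweibein t x) (h' : IsZweibein t' x')
    (heq : Wedge t x = Wedge t' x') :
    (∃ a : ℝ, 0 < a ∧ x' + t' = a • (x + t)) ∧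
    (∃ c : ℝ, 0 < c ∧ x' - t' = c • (x - t)) := by
  obtain ⟨hn1, hn2, hn3⟩ := zw_null h
  obtain ⟨hn1', hn2', hn3'⟩ := zw_null h'
  obtain ⟨hs1, hs2⟩ := zw_sign h
  obtain ⟨hs1', hs2'⟩ := zw_sign h'
  have himp := wedge_eq_imp h h' heq
  constructor
  · exact cone_extract hn1 hn2 hn3 hn1'
      (fun z h1 h2 => (himp z h1 h2).1) hs1 hs2 hs1'
  · have hres := cone_extract (u := -(x - t)) (v := -(x + t)) (w := -(x' - t'))
      (by rw [mg_neg_left, mg_neg_right, hn2]; ring)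
      (by rw [mg_neg_left, mg_neg_right, hn1]; ring)
      (by rw [mg_neg_left, mg_neg_right, mg_comm, hn3]; ring)
      (by rw [mg_neg_left, mg_neg_right, hn2']; ring)
      (fun z h1 h2 => by
        rw [mg_neg_right] at h1 h2
        have h1' : 0 ≤ mg (-z) (x - t) := by rw [mg_neg_left]; linarith
        have h2' : 0 ≤ mg (-z) (x + t) := by rw [mg_neg_left]; linarith
        have := (himp (-z) h2' h1').2
        rw [mg_neg_left] at this
        rw [mg_neg_right]; linarith)
      (by simp only [Pi.neg_apply]; linarith)
      (by simp only [Pi.neg_apply]; linarith)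
      (by simp only [Pi.neg_apply]; linarith)
    obtain ⟨c, hc, hcc⟩ := hres
    refine ⟨c, hc, ?_⟩
    rw [smul_neg] at hcc
    exact neg_inj.mp hcc

end part3

section part4

variable {t x t' x' : V4} {μ : V4 →ₗ[ℝ] V4}

lemma lorentz_inj (hp : ∀ x y, mg (μ x) (μ y) = mg x y) : Function.Injective μ := by
  have hker : ∀ w, μ w = 0 → w = 0 := by
    intro w hw
    apply mg_nondeg (w := w)
    intro y
    rw [mg_comm, ← hp, hw, mg_zero_left]
  intro a b hab
  have : a - b = 0 := hker _ (by rw [map_sub, hab, sub_self])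
  exact sub_eq_zero.mp this

lemma lorentz_surj (hp : ∀ x y, mg (μ x) (μ y) = mg x y) : Function.Surjective μ :=
  (LinearMap.injective_iff_surjective).mp (lorentz_inj hp)

lemma image_wedge (hp : ∀ x y, mg (μ x) (μ y) = mg x y) :
    ⇑μ '' Wedge t x = Wedge (μ t) (μ x) := by
  ext y
  constructor
  · rintro ⟨w, hw, rfl⟩
    unfold Wedge at *
    rw [Set.mem_setOf_eq] at *
    rw [hp, hp]
    exact hw
  · intro hy
    obtain ⟨w, rfl⟩ := lorentz_surj hp y
    refine ⟨w, ?_, rfl⟩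
    unfold Wedge at *
    rw [Set.mem_setOf_eq] at *
    rw [hp, hp] at hy
    exact hy

lemma mg_e0_e0 : mg e0 e0 = 1 := by simp [mg, e0]

lemma mg_t_e0 (t : V4) : mg t e0 = t 0 := by simp [mg, e0]

lemma zweibein_image (hμ : IsRestrictedLorentz μ) (h : IsZweibein t x) :
    IsZweibein (μ t) (μ x) := by
  obtain ⟨hp, hdet, he0⟩ := hμ
  obtain ⟨htt, hxx, htx, ht0⟩ := h
  refine ⟨by rw [hp]; exact htt, by rw [hp]; exact hxx, by rw [hp]; exact htx, ?_⟩
  apply pos_time (t := μ e0)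
  · rw [hp, mg_e0_e0]; norm_num
  · exact he0
  · rw [hp, htt]; norm_num
  · rw [hp, mg_t_e0]; exact ht0
  · intro h0
    have : mg (μ t) (μ t) = 0 := by rw [h0, mg_zero_left]
    rw [hp, htt] at this
    norm_num at this

lemma null_orth {w z : V4} (hw : mg w w = 0) (hz : mg z z = 0) (hwz : mg w z = 0)
    (hwne : w ≠ 0) : ∃ c : ℝ, z = c • w := by
  have hw0 : w 0 ≠ 0 := fun h0 => hwne (zero_of_null_time hw h0)
  unfold mg at hw hz hwz
  have hsum : (z 0 * w 1 - w 0 * z 1)^2 + (z 0 * w 2 - w 0 * z 2)^2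
      + (z 0 * w 3 - w 0 * z 3)^2 = 0 := by
    linear_combination (-(z 0^2)) * hw + (-(w 0^2)) * hz + (2 * z 0 * w 0) * hwz
  have k1 : z 0 * w 1 - w 0 * z 1 = 0 := by
    nlinarith [sq_nonneg (z 0 * w 1 - w 0 * z 1), sq_nonneg (z 0 * w 2 - w 0 * z 2),
      sq_nonneg (z 0 * w 3 - w 0 * z 3)]
  have k2 : z 0 * w 2 - w 0 * z 2 = 0 := by
    nlinarith [sq_nonneg (z 0 * w 1 - w 0 * z 1), sq_nonneg (z 0 * w 2 - w 0 * z 2),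
      sq_nonneg (z 0 * w 3 - w 0 * z 3)]
  have k3 : z 0 * w 3 - w 0 * z 3 = 0 := by
    nlinarith [sq_nonneg (z 0 * w 1 - w 0 * z 1), sq_nonneg (z 0 * w 2 - w 0 * z 2),
      sq_nonneg (z 0 * w 3 - w 0 * z 3)]
  have h0 : z 0 = z 0 / w 0 * w 0 := by field_simp
  have h1 : z 1 = z 0 / w 0 * w 1 := by field_simp; linarith
  have h2 : z 2 = z 0 / w 0 * w 2 := by field_simp; linarith
  have h3 : z 3 = z 0 / w 0 * w 3 := by field_simp; linarith
  refine ⟨z 0 / w 0, funext fun i => ?_⟩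
  fin_cases i
  · exact h0
  · exact h1
  · exact h2
  · exact h3

lemma wedge_eq_of_rays {c d : ℝ} (hu : x' + t' = c • (x + t)) (hv : x' - t' = d • (x - t))
    (hc : 0 < c) (hd : 0 < d) : Wedge t' x' = Wedge t x := by
  ext y
  rw [mem_wedge, mem_wedge, hu, hv, mg_smul_right, mg_smul_right]
  constructor
  · rintro ⟨h1, h2⟩
    constructor <;> nlinarith
  · rintro ⟨h1, h2⟩
    constructor <;> nlinarith

lemma mem_neg_image {S : Set V4} {y : V4} : y ∈ (fun y : V4 => -y) '' S ↔ -y ∈ S := by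
  constructor
  · rintro ⟨w, hw, rfl⟩
    simpa using hw
  · intro h
    exact ⟨-y, h, by simp⟩

end part4

section part5

set_option maxHeartbeats 1000000 in
/-- A restricted Lorentz map fixing two independent null vectors `u, v` and a third
null vector `w` not in their plane is the identity. -/
lemma fix_three {u v w : V4} {μ : V4 →ₗ[ℝ] V4}
    (huu : mg u u = 0) (hvv : mg v v = 0) (huv : mg u v = -2) (hww : mg w w = 0)
    (hG : mg u w ≠ 0) (hH : mg v w ≠ 0)
    (hp : ∀ x y, mg (μ x) (μ y) = mg x y) (hdet : LinearMap.det μ = 1)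
    (h1 : μ u = u) (h2 : μ v = v) (h3 : μ w = w) :
    μ = LinearMap.id := by
  have hvu : mg v u = -2 := by rw [mg_comm]; exact huv
  have hcw1 : mg w u = mg u w := mg_comm _ _
  have hcw2 : mg w v = mg v w := mg_comm _ _
  set n : V4 := w + (mg w v / 2) • u + (mg w u / 2) • v with hndef
  have hnu : mg n u = 0 := by
    rw [hndef, mg_add_left, mg_add_left, mg_smul_left, mg_smul_left, huu, hvu, hcw1]
    ring
  have hnv : mg n v = 0 := by
    rw [hndef, mg_add_left, mg_add_left, mg_smul_left, mg_smul_left, hvv, huv, hcw2]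
    ring
  have hnn : mg n n = mg u w * mg v w := by
    rw [hndef]
    simp only [mg_add_left, mg_add_right, mg_smul_left, mg_smul_right,
      huu, hvv, huv, hvu, hww, hcw1, hcw2]
    ring
  have hnn_ne : mg n n ≠ 0 := by rw [hnn]; exact mul_ne_zero hG hH
  -- a nonzero vector orthogonal to u, v, w
  set φ : V4 →ₗ[ℝ] (Fin 3 → ℝ) :=
    LinearMap.pi (fun i => mgL (![u, v, w] i)) with hφdef
  have hni : ¬ Function.Injective φ := by
    intro hinj
    have hle := LinearMap.finrank_le_finrank_of_injective hinj
    simp [Module.finrank_fin_fun] at hle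
  rw [← LinearMap.ker_eq_bot] at hni
  obtain ⟨w₀, hw₀mem, hw₀ne⟩ := (Submodule.ne_bot_iff _).mp hni
  rw [LinearMap.mem_ker] at hw₀mem
  have ho_u : mg w₀ u = 0 := by
    have := congrFun hw₀mem 0
    simpa [hφdef, LinearMap.pi_apply] using this
  have ho_v : mg w₀ v = 0 := by
    have := congrFun hw₀mem 1
    simpa [hφdef, LinearMap.pi_apply] using this
  have ho_w : mg w₀ w = 0 := by
    have := congrFun hw₀mem 2
    simpa [hφdef, LinearMap.pi_apply] using this
  have ho_n : mg w₀ n = 0 := by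
    rw [hndef, mg_add_right, mg_add_right, mg_smul_right, mg_smul_right, ho_u, ho_v, ho_w]
    ring
  have hno : mg n w₀ = 0 := by rw [mg_comm]; exact ho_n
  have huo : mg u w₀ = 0 := by rw [mg_comm]; exact ho_u
  have hvo : mg v w₀ = 0 := by rw [mg_comm]; exact ho_v
  have hw₀w₀ : mg w₀ w₀ < 0 := by
    apply orth_timelike_neg (t := u - v)
    · rw [mg_sub_left, mg_sub_right, mg_sub_right, huu, hvv, huv, hvu]; norm_num
    · rw [mg_sub_right, ho_u, ho_v]; ring
    · exact hw₀ne
  -- linear independence of the frame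
  have li : LinearIndependent ℝ ![u, v, n, w₀] := by
    rw [Fintype.linearIndependent_iff]
    intro g hg
    have hsum : g 0 • u + g 1 • v + g 2 • n + g 3 • w₀ = 0 := by
      simpa [Fin.sum_univ_four] using hg
    have e1 : g 1 = 0 := by
      have := congrArg (fun z => mg z u) hsum
      simp only [mg_add_left, mg_smul_left, huu, hvu, hnu, ho_u, mg_zero_left] at this
      linarith
    have e0 : g 0 = 0 := by
      have := congrArg (fun z => mg z v) hsum
      simp only [mg_add_left, mg_smul_left, hvv, huv, hnv, ho_v, mg_zero_left] at this
      linarith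
    have e2 : g 2 = 0 := by
      have := congrArg (fun z => mg z n) hsum
      simp only [mg_add_left, mg_smul_left, mg_comm u n, mg_comm v n,
        hnu, hnv, ho_n, mg_zero_left] at this
      have h' : g 2 * mg n n = 0 := by linarith
      rcases mul_eq_zero.mp h' with h' | h'
      · exact h'
      · exact absurd h' hnn_ne
    have e3 : g 3 = 0 := by
      have := congrArg (fun z => mg z w₀) hsum
      simp only [mg_add_left, mg_smul_left, huo, hvo, hno, mg_zero_left] at this
      have h' : g 3 * mg w₀ w₀ = 0 := by linarith
      rcases mul_eq_zero.mp h' with h' | h'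
      · exact h'
      · exact absurd h' (ne_of_lt hw₀w₀)
    intro i
    fin_cases i
    · exact e0
    · exact e1
    · exact e2
    · exact e3
  have hspan : ⊤ ≤ Submodule.span ℝ (Set.range ![u, v, n, w₀]) := by
    have hr : Module.finrank ℝ (Submodule.span ℝ (Set.range ![u, v, n, w₀])) = 4 := by
      rw [finrank_span_eq_card li]
      simp
    exact ge_of_eq (Submodule.eq_top_of_finrank_eq (by rw [hr]; simp [Module.finrank_fin_fun]))
  -- vanishing pairing against the frame forces zero
  have nd : ∀ s : V4, mg s u = 0 → mg s v = 0 → mg s n = 0 →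
      mg s w₀ = 0 → s = 0 := by
    intro s f1 f2 f3 f4
    apply mg_nondeg (w := s)
    intro y
    have hbz : mgL s = (0 : V4 →ₗ[ℝ] ℝ) := by
      apply (Module.Basis.mk li hspan).ext
      intro i
      rw [Module.Basis.mk_apply]
      fin_cases i <;>
        simp only [Matrix.cons_val_zero, Matrix.cons_val_one, Matrix.head_cons,
          Matrix.cons_val_two, Matrix.tail_cons, Matrix.cons_val_three,
          mgL_apply, LinearMap.zero_apply, mg_comm _ s]
      · exact f1
      · exact f2
      · exact f3
      · exact f4
    calc mg y s = mgL s y := rfl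
    _ = 0 := by rw [hbz]; rfl
  -- μ fixes n
  have hfix_n : μ n = n := by
    rw [hndef, map_add, map_add, map_smul, map_smul, h1, h2, h3]
  -- μ w₀ is proportional to w₀
  have hμo_u : mg (μ w₀) u = 0 := by rw [← h1, hp]; exact ho_u
  have hμo_v : mg (μ w₀) v = 0 := by rw [← h2, hp]; exact ho_v
  have hμo_w : mg (μ w₀) w = 0 := by rw [← h3, hp]; exact ho_w
  have hμo_n : mg (μ w₀) n = 0 := by
    rw [hndef, mg_add_right, mg_add_right, mg_smul_right, mg_smul_right,
      hμo_u, hμo_v, hμo_w]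
    ring
  set c : ℝ := mg (μ w₀) w₀ / mg w₀ w₀ with hcdef
  have hμw₀ : μ w₀ = c • w₀ := by
    have hz : μ w₀ - c • w₀ = 0 := by
      apply nd
      · rw [mg_sub_left, mg_smul_left, hμo_u, ho_u]; ring
      · rw [mg_sub_left, mg_smul_left, hμo_v, ho_v]; ring
      · rw [mg_sub_left, mg_smul_left, hμo_n, ho_n]; ring
      · rw [mg_sub_left, mg_smul_left, hcdef, div_mul_cancel₀ _ (ne_of_lt hw₀w₀), sub_self]
    exact sub_eq_zero.mp hz
  have hc2 : c = 1 ∨ c = -1 := by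
    have hpres : mg (μ w₀) (μ w₀) = mg w₀ w₀ := hp _ _
    rw [hμw₀, mg_smul_left, mg_smul_right] at hpres
    have h' : (c - 1) * (c + 1) * mg w₀ w₀ = 0 := by nlinarith [hpres]
    rcases mul_eq_zero.mp h' with h' | h'
    · rcases mul_eq_zero.mp h' with h'' | h''
      · left; linarith
      · right; linarith
    · exact absurd h' (ne_of_lt hw₀w₀)
  rcases hc2 with hc | hc
  · -- identity case
    apply (Module.Basis.mk li hspan).ext
    intro i
    rw [Module.Basis.mk_apply]
    fin_cases i
    · simpa using h1
    · simpa using h2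
    · simpa using hfix_n
    · simpa [hμw₀, hc] using rfl
  · -- determinant contradiction
    exfalso
    have hcol : ∀ j : Fin 4,
        μ ((Module.Basis.mk li hspan) j) = (![1,1,1,(-1:ℝ)] j) • (Module.Basis.mk li hspan) j := by
      intro j
      rw [Module.Basis.mk_apply]
      fin_cases j
      · simpa using h1
      · simpa using h2
      · simpa using hfix_n
      · simpa [hμw₀, hc] using rfl
    have hM : LinearMap.toMatrix (Module.Basis.mk li hspan) (Module.Basis.mk li hspan) μ
        = Matrix.diagonal ![1,1,1,(-1:ℝ)] := by
      ext i j
      rw [LinearMap.toMatrix_apply, hcol j, map_smul, Module.Basis.repr_self]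
      by_cases hij : i = j
      · subst hij
        simp [Finsupp.single_apply, Matrix.diagonal_apply]
      · simp [Finsupp.single_apply, Matrix.diagonal_apply, hij, Ne.symm hij]
    have hd1 : (LinearMap.toMatrix (Module.Basis.mk li hspan) (Module.Basis.mk li hspan) μ).det = 1 := by
      rw [LinearMap.det_toMatrix]
      exact hdet
    rw [hM, Matrix.det_diagonal, Fin.prod_univ_four] at hd1
    rw [show ![1,1,1,(-1:ℝ)] 2 = 1 from rfl, show ![1,1,1,(-1:ℝ)] 3 = -1 from rfl] at hd1
    norm_num at hd1

end part5

set_option maxHeartbeats 2000000 in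
/-- If two Rindler wedges `W_a`, `W_b` satisfy `W_a ∉ {W_b, -W_b}`, then the only
restricted Lorentz transformation mapping both `W_a` onto `W_a` and `W_b` onto
`W_b` is the identity. -/
theorem trivial_joint_wedge_stabilizer
    (ta xa tb xb : V4) (ha : IsZweibein ta xa) (hb : IsZweibein tb xb)
    (hne : Wedge ta xa ≠ Wedge tb xb)
    (hne' : Wedge ta xa ≠ (fun y : V4 => -y) '' Wedge tb xb)
    (μ : V4 →ₗ[ℝ] V4) (hμ : IsRestrictedLorentz μ)
    (hWa : ⇑μ '' Wedge ta xa = Wedge ta xa)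
    (hWb : ⇑μ '' Wedge tb xb = Wedge tb xb) :
    μ = LinearMap.id := by
  obtain ⟨hmet, hdet, he0⟩ := hμ
  -- the wedges of the images coincide with the original wedges
  have hWa' : Wedge ta xa = Wedge (μ ta) (μ xa) :=
    (((image_wedge hmet).symm.trans hWa).symm : _)
  have hWb' : Wedge tb xb = Wedge (μ tb) (μ xb) :=
    (((image_wedge hmet).symm.trans hWb).symm : _)
  -- eigenvector equations for the four characteristic null vectors
  obtain ⟨⟨p, hp1, hp2⟩, ⟨q, hq1, hq2⟩⟩ :=
    rays_of_wedge_eq ha (zweibein_image ⟨hmet, hdet, he0⟩ ha) hWa'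
  obtain ⟨⟨r, hr1, hr2⟩, ⟨s, hs1, hs2⟩⟩ :=
    rays_of_wedge_eq hb (zweibein_image ⟨hmet, hdet, he0⟩ hb) hWb'
  have hμua : μ (xa + ta) = p • (xa + ta) := by rw [map_add]; exact hp2
  have hμva : μ (xa - ta) = q • (xa - ta) := by rw [map_sub]; exact hq2
  have hμub : μ (xb + tb) = r • (xb + tb) := by rw [map_add]; exact hr2
  have hμvb : μ (xb - tb) = s • (xb - tb) := by rw [map_sub]; exact hs2
  obtain ⟨hna1, hna2, hna3⟩ := zw_null ha
  obtain ⟨hnb1, hnb2, hnb3⟩ := zw_null hb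
  obtain ⟨hsa1, hsa2⟩ := zw_sign ha
  obtain ⟨hsb1, hsb2⟩ := zw_sign hb
  have hrel : ∀ {A B : V4} {α β : ℝ}, μ A = α • A → μ B = β • B →
      (α * β - 1) * mg A B = 0 := by
    intro A B α β hA hB
    have h := hmet A B
    rw [hA, hB, mg_smul_left, mg_smul_right] at h
    linear_combination h
  -- basic eigenvalue relations
  have hpq : p * q = 1 := by
    have := hrel hμua hμva
    rw [hna3] at this
    rcases mul_eq_zero.mp this with h' | h'
    · linarith [sub_eq_zero.mp h']
    · norm_num at h'
  have hrs : r * s = 1 := by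
    have := hrel hμub hμvb
    rw [hnb3] at this
    rcases mul_eq_zero.mp this with h' | h'
    · linarith [sub_eq_zero.mp h']
    · norm_num at h'
  have hua_ne : xa + ta ≠ 0 := by
    intro h0
    rw [h0] at hsa1
    simp at hsa1
  have hva_ne : xa - ta ≠ 0 := by
    intro h0
    rw [h0] at hsa2
    simp at hsa2
  by_cases hCA : mg (xa + ta) (xb + tb) ≠ 0 ∧ mg (xa - ta) (xb + tb) ≠ 0
  · -- Case A : the null vector xb + tb is transverse to the plane of wedge a
    obtain ⟨hG1, hG2⟩ := hCA
    have hpr : p * r = 1 := by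
      rcases mul_eq_zero.mp (hrel hμua hμub) with h' | h'
      · linarith [sub_eq_zero.mp h']
      · exact absurd h' hG1
    have hqr : q * r = 1 := by
      rcases mul_eq_zero.mp (hrel hμva hμub) with h' | h'
      · linarith [sub_eq_zero.mp h']
      · exact absurd h' hG2
    have hqr' : q = r := mul_left_cancel₀ (ne_of_gt hp1) (hpq.trans hpr.symm)
    have hq_one : q = 1 := by
      rw [← hqr'] at hqr
      rcases mul_self_eq_one_iff.mp hqr with h' | h'
      · exact h'
      · linarith
    have hr_one : r = 1 := hqr'.symm.trans hq_one
    have hp_one : p = 1 := by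
      rw [hq_one, mul_one] at hpq
      exact hpq
    exact fix_three hna1 hna2 hna3 hnb1 hG1 hG2 hmet hdet
      (by rw [hμua, hp_one, one_smul]) (by rw [hμva, hq_one, one_smul])
      (by rw [hμub, hr_one, one_smul])
  by_cases hCB : mg (xa + ta) (xb - tb) ≠ 0 ∧ mg (xa - ta) (xb - tb) ≠ 0
  · -- Case B : the null vector xb - tb is transverse to the plane of wedge a
    obtain ⟨hG3, hG4⟩ := hCB
    have hps : p * s = 1 := by
      rcases mul_eq_zero.mp (hrel hμua hμvb) with h' | h'
      · linarith [sub_eq_zero.mp h']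
      · exact absurd h' hG3
    have hqs : q * s = 1 := by
      rcases mul_eq_zero.mp (hrel hμva hμvb) with h' | h'
      · linarith [sub_eq_zero.mp h']
      · exact absurd h' hG4
    have hqs' : q = s := mul_left_cancel₀ (ne_of_gt hp1) (hpq.trans hps.symm)
    have hq_one : q = 1 := by
      rw [← hqs'] at hqs
      rcases mul_self_eq_one_iff.mp hqs with h' | h'
      · exact h'
      · linarith
    have hs_one : s = 1 := hqs'.symm.trans hq_one
    have hp_one : p = 1 := by
      rw [hq_one, mul_one] at hpq
      exact hpq
    exact fix_three hna1 hna2 hna3 hnb2 hG3 hG4 hmet hdet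
      (by rw [hμua, hp_one, one_smul]) (by rw [hμva, hq_one, one_smul])
      (by rw [hμvb, hs_one, one_smul])
  -- Case C : both wedges lie in the same plane, contradicting the hypotheses
  rw [not_and_or, not_not, not_not] at hCA hCB
  rcases hCA with h1 | h2 <;> rcases hCB with h3 | h4
  · -- xb + tb ∥ xa + ta and xb - tb ∥ xa + ta : impossible
    obtain ⟨c, hub⟩ := null_orth hna1 hnb1 h1 hua_ne
    obtain ⟨d, hvb⟩ := null_orth hna1 hnb2 h3 hua_ne
    exfalso
    rw [hub, hvb, mg_smul_left, mg_smul_right, hna1] at hnb3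
    norm_num at hnb3
  · -- xb + tb ∥ xa + ta and xb - tb ∥ xa - ta : the wedges coincide
    obtain ⟨c, hub⟩ := null_orth hna1 hnb1 h1 hua_ne
    obtain ⟨d, hvb⟩ := null_orth hna2 hnb2 h4 hva_ne
    have hcb0 := congrFun hub 0
    have hdb0 := congrFun hvb 0
    rw [Pi.smul_apply, smul_eq_mul] at hcb0 hdb0
    have hc_pos : 0 < c := by nlinarith
    have hd_pos : 0 < d := by nlinarith
    exact absurd (wedge_eq_of_rays hub hvb hc_pos hd_pos).symm hne
  · -- xb + tb ∥ xa - ta and xb - tb ∥ xa + ta : opposite wedges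
    obtain ⟨c, hub⟩ := null_orth hna2 hnb1 h2 hva_ne
    obtain ⟨d, hvb⟩ := null_orth hna1 hnb2 h3 hua_ne
    have hcb0 := congrFun hub 0
    have hdb0 := congrFun hvb 0
    rw [Pi.smul_apply, smul_eq_mul] at hcb0 hdb0
    have hc_neg : c < 0 := by nlinarith
    have hd_neg : d < 0 := by nlinarith
    have hop : Wedge ta xa = (fun y : V4 => -y) '' Wedge tb xb := by
      ext y
      rw [mem_neg_image, mem_wedge, mem_wedge, hub, hvb,
        mg_neg_left, mg_neg_left, mg_smul_right, mg_smul_right]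
      constructor
      · rintro ⟨ha1, ha2⟩
        have e1 : 0 < (-c) * mg y (xa - ta) := mul_pos (by linarith) ha2
        have e2 : 0 < (-d) * mg y (xa + ta) := mul_pos (by linarith) ha1
        constructor <;> linarith
      · rintro ⟨hb1, hb2⟩
        have hb1' : 0 < (-c) * mg y (xa - ta) := by linarith
        have hb2' : 0 < (-d) * mg y (xa + ta) := by linarith
        constructor
        · by_contra hcon
          push_neg at hcon
          nlinarith
        · by_contra hcon
          push_neg at hcon
          nlinarith
    exact absurd hop hne'
  · -- xb + tb ∥ xa - ta and xb - tb ∥ xa - ta : impossible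
    obtain ⟨c, hub⟩ := null_orth hna2 hnb1 h2 hva_ne
    obtain ⟨d, hvb⟩ := null_orth hna2 hnb2 h4 hva_ne
    exfalso
    rw [hub, hvb, mg_smul_left, mg_smul_right, hna2] at hnb3
    norm_num at hnb3
end
end
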